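/- Every finite graph G with vertex set {1,...,n} has a unique externally complete maximal independent set, i.e., a unique maximal independent set S with Ext(S) = V \ S. -/

import Mathlib

open Finset

/-- A set of vertices is independent: no two of its vertices are adjacent. -/
def Indep {n : ℕ} (G : SimpleGraph (Fin n)) (A : Finset (Fin n)) : Prop :=
  ∀ u ∈ A, ∀ v ∈ A, ¬ G.Adj u v

instance {n : ℕ} (G : SimpleGraph (Fin n)) [DecidableRel G.Adj] (A : Finset (Fin n)) :
    Decidable (Indep G A) := by unfold Indep; infer_instance

/-- A maximal independent set. -/
def MaxIndep {n : ℕ} (G : SimpleGraph (Fin n)) (A : Finset (Fin n)) : Prop :=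
  Indep G A ∧ ∀ B, Indep G B → A ⊆ B → A = B

/-- Externally active vertices with respect to the independent set `A`:
vertices outside `A` adjacent to and greater than some vertex of `A`. -/
def ExtAct {n : ℕ} (G : SimpleGraph (Fin n)) [DecidableRel G.Adj] (A : Finset (Fin n)) :
    Finset (Fin n) :=
  univ.filter (fun v => v ∉ A ∧ ∃ a ∈ A, G.Adj v a ∧ a < v)

/-- The neighbours of `v` that can substitute `v` in `A` keeping independence. -/
def Subs {n : ℕ} (G : SimpleGraph (Fin n)) [DecidableRel G.Adj] (A : Finset (Fin n))
    (v : Fin n) : Finset (Fin n) :=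
  univ.filter (fun u => G.Adj v u ∧ Indep G (insert u (A.erase v)))

/-- Internally active vertices of `A`: vertices `v ∈ A` with `Subs v = ∅` or
`v` greater than every element of `Subs v`. -/
def IntAct {n : ℕ} (G : SimpleGraph (Fin n)) [DecidableRel G.Adj] (A : Finset (Fin n)) :
    Finset (Fin n) :=
  A.filter (fun v => ∀ u ∈ Subs G A v, u < v)

/-- The interval `[A;B]` of the Boolean lattice. -/
def Itv {n : ℕ} (A B : Finset (Fin n)) : Set (Finset (Fin n)) :=
  {X | A ⊆ X ∧ X ⊆ B}
noncomputable def greedy {n : ℕ} (G : SimpleGraph (Fin n)) [DecidableRel G.Adj] : Fin n → Bool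
  | v => ((univ.filter (fun u => u < v)).attach.toList).all
      (fun u => !(greedy G u.1 && decide (G.Adj u.1 v)))
termination_by v => v.val
decreasing_by
  exact Fin.lt_def.mp (Finset.mem_filter.mp u.2).2

lemma greedy_iff {n : ℕ} (G : SimpleGraph (Fin n)) [DecidableRel G.Adj] (v : Fin n) :
    greedy G v = true ↔ ∀ u : Fin n, u < v → greedy G u = true → ¬ G.Adj u v := by
  rw [greedy]
  simp [List.all_eq_true, Finset.mem_toList]
  exact forall₂_congr fun u _ => by rw [imp_iff_not_or, Bool.not_eq_true]

/-- Every graph has a unique externally complete maximal independent set. -/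
theorem exists_unique_externally_complete (n : ℕ) (G : SimpleGraph (Fin n))
    [DecidableRel G.Adj] :
    ∃! S : Finset (Fin n), MaxIndep G S ∧ ExtAct G S = Sᶜ := by
  set S : Finset (Fin n) := univ.filter (fun v => greedy G v = true) with hS
  have hmemS : ∀ v : Fin n, v ∈ S ↔ greedy G v = true := by
    intro v; simp [hS]
  have hindep : Indep G S := by
    intro u hu v hv hadj
    rcases lt_trichotomy u v with h | h | h
    · exact ((greedy_iff G v).mp ((hmemS v).mp hv)) u h ((hmemS u).mp hu) hadj
    · exact G.ne_of_adj hadj (by rw [h])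
    · exact ((greedy_iff G u).mp ((hmemS u).mp hu)) v h ((hmemS v).mp hv) (G.adj_symm hadj)
  have hout : ∀ v : Fin n, v ∉ S → ∃ a ∈ S, a < v ∧ G.Adj a v := by
    intro v hv
    by_contra hc
    push_neg at hc
    apply hv
    rw [hmemS, greedy_iff]
    intro u hu hgu hadj
    exact hc u ((hmemS u).mpr hgu) hu hadj
  refine ⟨S, ⟨⟨hindep, ?_⟩, ?_⟩, ?_⟩
  · intro B hB hSB
    apply Finset.Subset.antisymm hSB
    intro v hv
    by_contra hvS
    obtain ⟨a, haS, _, hadj⟩ := hout v hvS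
    exact hB a (hSB haS) v hv hadj
  · ext v
    simp only [ExtAct, Finset.mem_filter, Finset.mem_univ, true_and, Finset.mem_compl]
    constructor
    · exact fun h => h.1
    · intro hv
      obtain ⟨a, haS, hlt, hadj⟩ := hout v hv
      exact ⟨hv, a, haS, G.adj_symm hadj, hlt⟩
  · rintro T ⟨⟨hTind, _⟩, hText⟩
    have key : ∀ k : ℕ, ∀ v : Fin n, (v : ℕ) < k → (v ∈ T ↔ v ∈ S) := by
      intro k
      induction k with
      | zero => intro v h; omega
      | succ k ih =>
        intro v hv
        have ihv : ∀ u : Fin n, u < v → (u ∈ T ↔ u ∈ S) := by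
          intro u hu
          exact ih u (by have := Fin.lt_def.mp hu; omega)
        constructor
        · intro hvT
          rw [hmemS, greedy_iff]
          intro u hu hgu hadj
          have huT : u ∈ T := (ihv u hu).mpr ((hmemS u).mpr hgu)
          exact hTind u huT v hvT hadj
        · intro hvS
          by_contra hvT
          have hmem : v ∈ ExtAct G T := by rw [hText]; simpa using hvT
          simp only [ExtAct, Finset.mem_filter, Finset.mem_univ, true_and] at hmem
          obtain ⟨_, a, haT, hadj, hlt⟩ := hmem
          have haS : a ∈ S := (ihv a hlt).mp haT
          exact ((greedy_iff G v).mp ((hmemS v).mp hvS)) a hlt ((hmemS a).mp haS) (G.adj_symm hadj)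
    ext v
    exact key (v.val + 1) v (by omega)
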